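/- Let V be a finite-dimensional real inner product space, J an orthogonal complex structure on V, and P a nearly Kähler torsion tensor on (V, J). If P is not identically zero (i.e. there exist x, y ∈ V with P(x,y) ≠ 0, the pointwise form of strictness of a nearly Kähler structure), then dim V ≥ 6. (The six vectors x, J x, y₁, J y₁, P(x,y), J(P(x,y)) are nonzero and pairwise orthogonal, where y₁ is the component of y orthogonal to the span of x and J x.) -/

import Mathlib

open scoped RealInnerProductSpace

/-- If a nearly Kähler torsion tensor `P` on a finite-dimensional `(V, J)` is not
identically zero (pointwise strictness), then `dim V ≥ 6`. -/
theorem nearlyKahler_strict_dim_ge_six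
    (V : Type*) [NormedAddCommGroup V] [InnerProductSpace ℝ V] [FiniteDimensional ℝ V]
    (J : V →ₗ[ℝ] V)
    (hJ1 : ∀ x : V, J (J x) = -x)
    (hJ2 : ∀ x y : V, ⟪J x, J y⟫ = ⟪x, y⟫)
    (P : V →ₗ[ℝ] V →ₗ[ℝ] V)
    (hP1 : ∀ x y z : V, ⟪P x y, z⟫ = -⟪y, P x z⟫)
    (hP2 : ∀ x y : V, P x (J y) = -J (P x y))
    (hP3 : ∀ x : V, P x x = 0)
    (hstrict : ∃ x y : V, P x y ≠ 0) :
    6 ≤ Module.finrank ℝ V := by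
  obtain ⟨x, y0, hxy0⟩ := hstrict
  -- basic facts about J
  have hJorth : ∀ v : V, ⟪v, J v⟫ = 0 := by
    intro v
    have h := hJ2 v (J v)
    rw [hJ1, inner_neg_right] at h
    have hc := real_inner_comm (J v) v
    linarith
  have hJne : ∀ v : V, v ≠ 0 → J v ≠ 0 := by
    intro v hv hJv
    apply hv
    have := hJ1 v
    rw [hJv, map_zero] at this
    simpa using this.symm
  have hx0 : x ≠ 0 := by
    intro h
    apply hxy0
    rw [h]
    simp
  have hxx : ⟪x, x⟫ ≠ 0 := by
    exact inner_self_ne_zero.mpr hx0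
  -- orthogonalize y0 against x and J x
  set a : ℝ := ⟪x, y0⟫ / ⟪x, x⟫ with ha
  set b : ℝ := ⟪J x, y0⟫ / ⟪x, x⟫ with hb
  set y : V := y0 - a • x - b • (J x) with hy
  have hPxJx : P x (J x) = 0 := by rw [hP2, hP3]; simp
  have hz_eq : P x y = P x y0 := by
    rw [hy]
    simp [map_sub, map_smul, hP3 x, hPxJx]
  set z : V := P x y with hzdef
  have hz0 : z ≠ 0 := by rw [hz_eq]; exact hxy0
  -- orthogonality of y to x, J x
  have hxy : ⟪x, y⟫ = 0 := by
    have h1 : ⟪x, y⟫ = ⟪x, y0⟫ - a * ⟪x, x⟫ - b * ⟪x, J x⟫ := by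
      simp [hy, inner_sub_right, real_inner_smul_right]
    rw [h1, hJorth x, ha]
    field_simp
    ring
  have hJxy : ⟪J x, y⟫ = 0 := by
    have h1 : ⟪J x, y⟫ = ⟪J x, y0⟫ - a * ⟪J x, x⟫ - b * ⟪J x, J x⟫ := by
      simp [hy, inner_sub_right, real_inner_smul_right]
    have h2 : ⟪J x, x⟫ = (0 : ℝ) := by rw [real_inner_comm]; exact hJorth x
    rw [h1, h2, hJ2, hb]
    field_simp
    ring
  have hy0' : y ≠ 0 := by
    intro h
    apply hz0
    rw [hzdef, h, map_zero]
  -- more orthogonality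
  have hxJy : ⟪x, J y⟫ = 0 := by
    have := hJ2 x y
    calc ⟪x, J y⟫ = ⟪J x, J (J y)⟫ := (hJ2 (x) (J y)).symm
    _ = -⟪J x, y⟫ := by rw [hJ1]; simp
    _ = 0 := by rw [hJxy]; ring
  have hJxJy : ⟪J x, J y⟫ = 0 := by rw [hJ2]; exact hxy
  have hyJy : ⟪y, J y⟫ = 0 := hJorth y
  have hzx : ⟪z, x⟫ = 0 := by
    rw [hzdef, hP1, hP3]; simp
  have hzJx : ⟪z, J x⟫ = 0 := by
    rw [hzdef, hP1, hPxJx]; simp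
  have hzy : ⟪z, y⟫ = 0 := by
    have h := hP1 x y y
    rw [← hzdef] at h
    have hc := real_inner_comm z y
    linarith
  have hzJy : ⟪z, J y⟫ = 0 := by
    have h1 : ⟪z, J y⟫ = ⟪y, J z⟫ := by
      have := hP1 x y (J y)
      rw [← hzdef, hP2, ← hzdef, inner_neg_right] at this
      linarith [this]
    have h2 : ⟪z, J y⟫ = -⟪y, J z⟫ := by
      calc ⟪z, J y⟫ = ⟪J z, J (J y)⟫ := (hJ2 z (J y)).symm
      _ = -⟪J z, y⟫ := by rw [hJ1]; simp
      _ = -⟪y, J z⟫ := by rw [real_inner_comm]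
    linarith
  have hzJz : ⟪z, J z⟫ = 0 := hJorth z
  have hxJz : ⟪x, J z⟫ = 0 := by
    calc ⟪x, J z⟫ = ⟪J x, J (J z)⟫ := (hJ2 x (J z)).symm
    _ = -⟪J x, z⟫ := by rw [hJ1]; simp
    _ = 0 := by rw [real_inner_comm, hzJx]; ring
  have hJxJz : ⟪J x, J z⟫ = 0 := by rw [hJ2, real_inner_comm]; exact hzx
  have hyJz : ⟪y, J z⟫ = 0 := by
    have h1 : ⟪z, J y⟫ = ⟪y, J z⟫ := by
      have := hP1 x y (J y)
      rw [← hzdef, hP2, ← hzdef, inner_neg_right] at this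
      linarith [this]
    rw [← h1, hzJy]
  have hJyJz : ⟪J y, J z⟫ = 0 := by rw [hJ2, real_inner_comm]; exact hzy
  -- the six vectors
  set v : Fin 6 → V := ![x, J x, y, J y, z, J z] with hv
  have hnz : ∀ i, v i ≠ 0 := by
    intro i
    fin_cases i <;> simp only [hv, Matrix.cons_val_zero, Matrix.cons_val_one, Matrix.head_cons] <;>
      first
        | exact hx0
        | exact hJne x hx0
        | exact hy0'
        | exact hJne y hy0'
        | exact hz0
        | exact hJne z hz0
  have hpair : Pairwise fun i j => ⟪v i, v j⟫ = 0 := by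
    intro i j hij
    have hsym : ∀ u w : V, ⟪u, w⟫ = 0 → ⟪w, u⟫ = 0 := by
      intro u w h; rw [real_inner_comm]; exact h
    fin_cases i <;> fin_cases j <;> simp only [hv] <;>
      first
        | exact absurd rfl hij
        | exact hJorth x
        | exact hsym _ _ (hJorth x)
        | exact hxy
        | exact hsym _ _ hxy
        | exact hxJy
        | exact hsym _ _ hxJy
        | exact hJxy
        | exact hsym _ _ hJxy
        | exact hJxJy
        | exact hsym _ _ hJxJy
        | exact hyJy
        | exact hsym _ _ hyJy
        | exact hzx
        | exact hsym _ _ hzx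
        | exact hzJx
        | exact hsym _ _ hzJx
        | exact hzy
        | exact hsym _ _ hzy
        | exact hzJy
        | exact hsym _ _ hzJy
        | exact hzJz
        | exact hsym _ _ hzJz
        | exact hxJz
        | exact hsym _ _ hxJz
        | exact hJxJz
        | exact hsym _ _ hJxJz
        | exact hyJz
        | exact hsym _ _ hyJz
        | exact hJyJz
        | exact hsym _ _ hJyJz
  have li : LinearIndependent ℝ v :=
    linearIndependent_of_ne_zero_of_inner_eq_zero hnz hpair
  simpa using li.fintype_card_le_finrank
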